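/- There exists a family of 𝔠 = 2^{ℵ₀} many infinite subsets of ω that are pairwise almost oscillating. -/

import Mathlib

open Set Cardinal

/-- Two sets A, B ⊆ ω are oscillating if no difference of two distinct elements
of A equals a difference of two distinct elements of B. -/
def Oscillating (A B : Set ℕ) : Prop :=
  ∀ x ∈ A, ∀ y ∈ A, ∀ w ∈ B, ∀ z ∈ B, x ≠ y → w ≠ z →
    ((y : ℤ) - (x : ℤ)).natAbs ≠ ((z : ℤ) - (w : ℤ)).natAbs

/-- A, B ⊆ ω are almost oscillating if A \ n and B \ n are oscillating for some n. -/
def AlmostOscillating (A B : Set ℕ) : Prop :=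
  ∃ n : ℕ, Oscillating {a ∈ A | n ≤ a} {b ∈ B | n ≤ b}

namespace AOscAux

def xr (r : ℕ → Bool) (n : ℕ) : ℕ := ∑ i ∈ Finset.range n, (r i).toNat * 2^i

lemma xr_lt (r : ℕ → Bool) (n : ℕ) : xr r n < 2^n := by
  induction n with
  | zero => simp [xr]
  | succ n ih =>
    have h1 : xr r (n+1) = xr r n + (r n).toNat * 2^n := Finset.sum_range_succ _ _
    have h2 : (2:ℕ)^(n+1) = 2^n + 2^n := by ring
    have h3 : (r n).toNat ≤ 1 := Bool.toNat_le _
    have h4 : (r n).toNat * 2^n ≤ 1 * 2^n := Nat.mul_le_mul_right _ h3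
    omega

lemma xr_agree {r s : ℕ → Bool} : ∀ m, xr r m = xr s m → ∀ i < m, r i = s i := by
  intro m
  induction m with
  | zero => intro _ i hi; omega
  | succ m ih =>
    intro h i hi
    have hr := xr_lt r m
    have hs := xr_lt s m
    have h1 : xr r (m+1) = xr r m + (r m).toNat * 2^m := Finset.sum_range_succ _ _
    have h2 : xr s (m+1) = xr s m + (s m).toNat * 2^m := Finset.sum_range_succ _ _
    have hm : r m = s m := by
      cases hr' : r m <;> cases hs' : s m <;>
        simp only [hr', hs', Bool.toNat_true, Bool.toNat_false] at h1 h2 <;>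
        first | rfl | (exfalso; omega)
    have hxm : xr r m = xr s m := by
      rw [hm] at h1; omega
    rcases Nat.lt_or_ge i m with h' | h'
    · exact ih hxm i h'
    · have : i = m := by omega
      rwa [this]

def E (r : ℕ → Bool) (n : ℕ) : ℕ := 2^n + xr r n

lemma E_lt (r : ℕ → Bool) (n : ℕ) : 2^n ≤ E r n ∧ E r n < 2^(n+1) := by
  have := xr_lt r n
  have : (2:ℕ)^(n+1) = 2^n + 2^n := by ring
  unfold E
  omega

lemma E_eq {r s : ℕ → Bool} {m n : ℕ} (h : E r m = E s n) : m = n ∧ xr r m = xr s n := by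
  have hm := E_lt r m
  have hn := E_lt s n
  have hmn : m = n := by
    by_contra hne
    rcases Nat.lt_or_ge m n with h' | h'
    · have : (2:ℕ)^(m+1) ≤ 2^n := Nat.pow_le_pow_right (by norm_num) h'
      omega
    · have h'' : n < m := by omega
      have : (2:ℕ)^(n+1) ≤ 2^m := Nat.pow_le_pow_right (by norm_num) h''
      omega
  subst hmn
  unfold E at h
  omega

lemma diff_eq {a b c d : ℕ} (hab : a < b) (hcd : c < d)
    (h : (4:ℕ)^b - 4^a = 4^d - 4^c) : a = c ∧ b = d := by
  have h1 : (4:ℕ)^a < 4^b := Nat.pow_lt_pow_right (by norm_num) hab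
  have h2 : (4:ℕ)^c < 4^d := Nat.pow_lt_pow_right (by norm_num) hcd
  have hbd : b = d := by
    by_contra hne
    rcases Nat.lt_or_ge b d with h' | h'
    · have hb : (4:ℕ)^(b+1) ≤ 4^d := Nat.pow_le_pow_right (by norm_num) h'
      have hc : (4:ℕ)^(c+1) ≤ 4^d := Nat.pow_le_pow_right (by norm_num) hcd
      have e1 : (4:ℕ)^(b+1) = 4 * 4^b := by ring
      have e2 : (4:ℕ)^(c+1) = 4 * 4^c := by ring
      have : (0:ℕ) < 4^a := Nat.pow_pos (by norm_num)
      omega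
    · have h'' : d < b := by omega
      have hb : (4:ℕ)^(d+1) ≤ 4^b := Nat.pow_le_pow_right (by norm_num) h''
      have hc : (4:ℕ)^(a+1) ≤ 4^b := Nat.pow_le_pow_right (by norm_num) hab
      have e1 : (4:ℕ)^(d+1) = 4 * 4^d := by ring
      have e2 : (4:ℕ)^(a+1) = 4 * 4^a := by ring
      have : (0:ℕ) < 4^c := Nat.pow_pos (by norm_num)
      omega
  subst hbd
  have : (4:ℕ)^a = 4^c := by omega
  exact ⟨Nat.pow_right_injective (by norm_num) this, rfl⟩

lemma pow_natAbs_eq {p q u v : ℕ} (hpq : p ≠ q) (huv : u ≠ v)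
    (h : (((4^q : ℕ) : ℤ) - ((4^p : ℕ) : ℤ)).natAbs
        = (((4^v : ℕ) : ℤ) - ((4^u : ℕ) : ℤ)).natAbs) :
    p = u ∨ p = v := by
  rcases Nat.lt_or_ge p q with h1 | h1 <;> rcases Nat.lt_or_ge u v with h2 | h2
  · have hle1 : (4:ℕ)^p ≤ 4^q := Nat.pow_le_pow_right (by norm_num) (le_of_lt h1)
    have hle2 : (4:ℕ)^u ≤ 4^v := Nat.pow_le_pow_right (by norm_num) (le_of_lt h2)
    have hnat : (4:ℕ)^q - 4^p = 4^v - 4^u := by omega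
    exact Or.inl (diff_eq h1 h2 hnat).1
  · have h2' : v < u := by omega
    have hle1 : (4:ℕ)^p ≤ 4^q := Nat.pow_le_pow_right (by norm_num) (le_of_lt h1)
    have hle2 : (4:ℕ)^v ≤ 4^u := Nat.pow_le_pow_right (by norm_num) (le_of_lt h2')
    have hnat : (4:ℕ)^q - 4^p = 4^u - 4^v := by omega
    exact Or.inr (diff_eq h1 h2' hnat).1
  · have h1' : q < p := by omega
    have hle1 : (4:ℕ)^q ≤ 4^p := Nat.pow_le_pow_right (by norm_num) (le_of_lt h1')
    have hle2 : (4:ℕ)^u ≤ 4^v := Nat.pow_le_pow_right (by norm_num) (le_of_lt h2)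
    have hnat : (4:ℕ)^p - 4^q = 4^v - 4^u := by omega
    exact Or.inr (diff_eq h1' h2 hnat).2
  · have h1' : q < p := by omega
    have h2' : v < u := by omega
    have hle1 : (4:ℕ)^q ≤ 4^p := Nat.pow_le_pow_right (by norm_num) (le_of_lt h1')
    have hle2 : (4:ℕ)^v ≤ 4^u := Nat.pow_le_pow_right (by norm_num) (le_of_lt h2')
    have hnat : (4:ℕ)^p - 4^q = 4^u - 4^v := by omega
    exact Or.inl (diff_eq h1' h2' hnat).2

def Afam (r : ℕ → Bool) : Set ℕ := Set.range (fun n => 4 ^ E r n)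

lemma elem_inj (r : ℕ → Bool) : Function.Injective (fun n => 4 ^ E r n) := by
  intro m n h
  have : E r m = E r n := Nat.pow_right_injective (by norm_num) h
  exact (E_eq this).1

lemma Afam_inj : Function.Injective Afam := by
  intro r s h
  funext i
  have hmem : (4 : ℕ) ^ E r (i+1) ∈ Afam s := by
    rw [← h]; exact ⟨i+1, rfl⟩
  obtain ⟨n, hn⟩ := hmem
  have hE : E s n = E r (i+1) := Nat.pow_right_injective (by norm_num) hn
  obtain ⟨hmn, hx⟩ := E_eq hE
  subst hmn
  exact (xr_agree _ hx.symm i (by omega))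

end AOscAux

open AOscAux
theorem exists_continuum_almost_oscillating :
    ∃ 𝒮 : Set (Set ℕ), Cardinal.mk ↥𝒮 = Cardinal.continuum ∧
      (∀ A ∈ 𝒮, A.Infinite) ∧
      (∀ A ∈ 𝒮, ∀ B ∈ 𝒮, A ≠ B → AlmostOscillating A B) := by
  refine ⟨Set.range Afam, ?_, ?_, ?_⟩
  · rw [Cardinal.mk_range_eq _ Afam_inj]
    rw [Cardinal.mk_arrow, Cardinal.mk_bool, Cardinal.mk_nat, Cardinal.lift_id,
      Cardinal.lift_id, Cardinal.two_power_aleph0]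
  · rintro A ⟨r, rfl⟩
    exact Set.infinite_range_of_injective (elem_inj r)
  · rintro A ⟨r, rfl⟩ B ⟨s, rfl⟩ hAB
    have hrs : r ≠ s := fun h => hAB (by rw [h])
    obtain ⟨k, hk⟩ := Function.ne_iff.mp hrs
    refine ⟨4 ^ 2 ^ (k+1), ?_⟩
    rintro x ⟨⟨m, rfl⟩, hxN⟩ y ⟨⟨m', rfl⟩, hyN⟩ w ⟨⟨n, rfl⟩, hwN⟩ z ⟨⟨n', rfl⟩, hzN⟩ hxy hwz h
    simp only at hxN hyN hwN hzN hxy hwz h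
    -- levels are > k
    have hlev : ∀ t : ℕ → Bool, ∀ j : ℕ, (4:ℕ) ^ 2^(k+1) ≤ 4 ^ E t j → k < j := by
      intro t j hj
      have hE := E_lt t j
      have h1 : 2^(k+1) ≤ E t j := (Nat.pow_le_pow_iff_right (by norm_num : 1 < 4)).mp hj
      have h2 : (2:ℕ)^(k+1) < 2^(j+1) := by omega
      have := (Nat.pow_lt_pow_iff_right (by norm_num : 1 < 2)).mp h2
      omega
    have hm : k < m := hlev r m hxN
    have hm' : k < m' := hlev r m' hyN
    have hn : k < n := hlev s n hwN
    have hn' : k < n' := hlev s n' hzN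
    have hpq : E r m ≠ E r m' := fun he => hxy (by rw [he])
    have huv : E s n ≠ E s n' := fun he => hwz (by rw [he])
    have h' : (((4 ^ E r m' : ℕ) : ℤ) - ((4 ^ E r m : ℕ) : ℤ)).natAbs
        = (((4 ^ E s n' : ℕ) : ℤ) - ((4 ^ E s n : ℕ) : ℤ)).natAbs := h
    have key := pow_natAbs_eq hpq huv h'
    rcases key with hkey | hkey
    · obtain ⟨hmn, hx⟩ := E_eq hkey
      subst hmn
      exact hk (xr_agree _ hx k hm)
    · obtain ⟨hmn, hx⟩ := E_eq hkey
      subst hmn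
      exact hk (xr_agree _ hx k hm)
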